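/- Let the optimal aimpoint be (x*, y*) with x* = (x_E - α²x_P)/(1-α²) and y* = (y_E - α²y_P - αd)/(1-α²), d = dist(E,P) > 0, α ∈ (0,1). Then x* - x_E = -α·d·∂y̲/∂x_E, y* - y_E = -α·d·∂y̲/∂y_E, x* - x_P = (d/α)·∂y̲/∂x_P, and y* - y_P = (d/α)·∂y̲/∂y_P, where the partials of y̲ = (y_E - α²y_P - αd)/(1-α²) are as follows: ∂y̲/∂x_E = -(α/(1-α²))(x_E-x_P)/d, ∂y̲/∂y_E = (1/(1-α²))(1-α(y_E-y_P)/d), ∂y̲/∂x_P = (α/(1-α²))(x_E-x_P)/d, ∂y̲/∂y_P = (α/(1-α²))(-α+(y_E-y_P)/d). -/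
import Mathlib

/-- The vectors from each player to the optimal aimpoint `(x*,y*)` (the lowest
point of the Apollonius circle) are proportional to the gradients of `y̲`. -/
theorem aimpoint_gradient_identities (xP yP xE yE α d : ℝ)
    (hα0 : 0 < α) (hα1 : α < 1)
    (hd : d = Real.sqrt ((xE - xP)^2 + (yE - yP)^2)) (hdpos : 0 < d) :
    (xE - α^2 * xP) / (1 - α^2) - xE
        = -(α * d) * (-(α / (1 - α^2)) * (xE - xP) / d)
    ∧ (yE - α^2 * yP - α * d) / (1 - α^2) - yE
        = -(α * d) * ((1 / (1 - α^2)) * (1 - α * (yE - yP) / d))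
    ∧ (xE - α^2 * xP) / (1 - α^2) - xP
        = (d / α) * ((α / (1 - α^2)) * (xE - xP) / d)
    ∧ (yE - α^2 * yP - α * d) / (1 - α^2) - yP
        = (d / α) * ((α / (1 - α^2)) * (-α + (yE - yP) / d)) := by
  have hα : α ≠ 0 := ne_of_gt hα0
  have hdne : d ≠ 0 := ne_of_gt hdpos
  have h1 : 1 - α^2 ≠ 0 := by nlinarith
  refine ⟨?_, ?_, ?_, ?_⟩ <;> field_simp <;> ring
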